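/- Let e ≥ 1 and let a,b ∈ ℕ with 0 ≤ a ≤ q-1 and b - ea ≥ 0. Let α_1,…,α_q enumerate F_q, and let C_{A,e}(a,b) = Σ_{d=0}^{a} span{(α_1^d,…,α_q^d)} ⊗ RS_q(b - ed + 1) ⊆ F_q^{q^2}. Set s_A = (b+1-q)/e and s̃_A = min{⌊s_A⌋, a} if s_A ≥ 0, and s̃_A = -1 otherwise. Then dim C_{A,e}(a,b) = (s̃_A + 1)q + (a - s̃_A)(b + 1 - e(a + s̃_A + 1)/2). -/

import Mathlib

open Polynomial

/-- The affine Reed–Solomon code `RS_q(k)`: evaluations of polynomials of degree `< k` at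
all elements of `F`.  By convention it is `{0}` for `k ≤ 0` and the full space for `k ≥ q`. -/
noncomputable def RS (F : Type*) [Field F] (k : ℤ) : Submodule F (F → F) :=
  (Polynomial.degreeLT F k.toNat).map
    (LinearMap.pi fun α : F => (Polynomial.aeval α).toLinearMap)

/-- The linear map `c ↦ v ⊗ c`, sending a word `c` to the matrix `(v i * c j)_{i,j}`. -/
noncomputable def vTensor (F : Type*) [Field F] {ι₁ ι₂ : Type*} (v : ι₁ → F) :
    (ι₂ → F) →ₗ[F] (ι₁ → ι₂ → F) where
  toFun c := fun i j => v i * c j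
  map_add' c d := by funext i j; simp [mul_add]
  map_smul' a c := by funext i j; simp only [Pi.smul_apply, smul_eq_mul, RingHom.id_apply]; ring

/-- The code `C_{𝔸,e}(a,b) = Σ_{d=0}^{a} ⟨(α^d)_α⟩ ⊗ RS_q(b - ed + 1) ⊆ F^{q²}`,
the evaluation code on the affine chart of the Hirzebruch surface `H_e`.  A codeword is a
matrix indexed by `F × F`, the entry at `(α, β)` being `α^d · f(β)`. -/
noncomputable def CA (F : Type*) [Field F] (e a b : ℕ) : Submodule F (F → F → F) :=
  ⨆ d ∈ Finset.Iic a, (RS F ((b : ℤ) - e * d + 1)).map (vTensor F fun α : F => α ^ d)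

lemma pow_li (F : Type*) [Field F] [Fintype F] :
    LinearIndependent F (fun i : Fin (Fintype.card F) => (fun α : F => α ^ (i : ℕ))) := by
  rw [Fintype.linearIndependent_iff]
  intro g hg i
  have hq1 : 1 ≤ Fintype.card F := Fintype.card_pos
  set p : F[X] := ∑ j : Fin (Fintype.card F), Polynomial.C (g j) * X ^ (j : ℕ) with hp
  have hdeg : p.natDegree < Fintype.card F := by
    have : p.natDegree ≤ Fintype.card F - 1 := by
      apply Polynomial.natDegree_sum_le_of_forall_le
      intro j _
      refine le_trans (natDegree_C_mul_le _ _) ?_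
      rw [natDegree_X_pow]
      exact Nat.le_sub_one_of_lt j.2
    omega
  have heval : ∀ α : F, p.eval α = 0 := by
    intro α
    have := congrFun hg α
    simpa [hp, Polynomial.eval_finset_sum] using this
  have hp0 : p = 0 :=
    Polynomial.eq_zero_of_natDegree_lt_card_of_eval_eq_zero p Function.injective_id
      (fun α => heval α) (by simpa using hdeg)
  have h2 := congrArg (fun r => Polynomial.coeff r (i : ℕ)) hp0
  simp only [hp, Polynomial.finset_sum_coeff, Polynomial.coeff_C_mul, Polynomial.coeff_X_pow,
    Polynomial.coeff_zero, mul_ite, mul_one, mul_zero] at h2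
  rw [Finset.sum_eq_single i (fun j _ hji => by
      simp only [ite_eq_right_iff]
      intro hij
      exact absurd (Fin.val_injective hij.symm) hji) (by simp)] at h2
  simpa using h2

lemma pow_span_top (F : Type*) [Field F] [Fintype F] :
    Submodule.span F ((fun i : ℕ => (fun α : F => α ^ i)) '' Set.Iio (Fintype.card F)) = ⊤ := by
  have h := (pow_li F).span_eq_top_of_card_eq_finrank'
    (by simp [Module.finrank_pi])
  rw [← h]
  congr 1
  rw [show (fun i : Fin (Fintype.card F) => (fun α : F => α ^ (i:ℕ))) =
    (fun i : ℕ => (fun α : F => α ^ i)) ∘ Fin.val from rfl, Set.range_comp,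
    show Set.range (Fin.val : Fin (Fintype.card F) → ℕ) = Set.Iio (Fintype.card F) by
      ext i
      constructor
      · rintro ⟨j, rfl⟩; exact j.2
      · exact fun h => ⟨⟨i, h⟩, rfl⟩]

lemma RS_eq_span (F : Type*) [Field F] [Fintype F] (k : ℤ) :
    RS F k = Submodule.span F
      ((fun i : ℕ => (fun α : F => α ^ i)) '' Set.Iio (min k.toNat (Fintype.card F))) := by
  classical
  have key : ∀ n : ℕ, (Polynomial.degreeLT F n).map
      (LinearMap.pi fun α : F => (Polynomial.aeval α).toLinearMap)
      = Submodule.span F ((fun i : ℕ => (fun α : F => α ^ i)) '' Set.Iio n) := by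
    intro n
    rw [Polynomial.degreeLT_eq_span_X_pow, Submodule.map_span]
    congr 1
    rw [Finset.coe_image, Set.image_image, Finset.coe_range]
    ext f
    constructor
    · rintro ⟨i, hi, rfl⟩
      exact ⟨i, hi, by funext α; simp⟩
    · rintro ⟨i, hi, rfl⟩
      exact ⟨i, hi, by funext α; simp⟩
  rcases le_or_gt k.toNat (Fintype.card F) with h | h
  · rw [min_eq_left h]; exact key _
  · rw [min_eq_right h.le]
    rw [pow_span_top]
    rw [RS, key]
    rw [eq_top_iff, ← pow_span_top F]
    exact Submodule.span_mono (Set.image_mono (fun i hi => lt_trans hi h))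

lemma w_li (F : Type*) [Field F] [Fintype F] :
    LinearIndependent F (fun p : Fin (Fintype.card F) × Fin (Fintype.card F) =>
      (fun α β : F => α ^ (p.1 : ℕ) * β ^ (p.2 : ℕ))) := by
  rw [Fintype.linearIndependent_iff]
  intro g hg p
  have key : ∀ (α : F) (i : Fin (Fintype.card F)),
      ∑ d : Fin (Fintype.card F), g (d, i) * α ^ (d : ℕ) = 0 := by
    intro α i
    have h1 : ∑ i : Fin (Fintype.card F),
        (∑ d : Fin (Fintype.card F), g (d, i) * α ^ (d : ℕ)) • (fun β : F => β ^ (i : ℕ)) = 0 := by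
      funext β
      have := congrFun (congrFun hg α) β
      simp only [Finset.sum_apply, Pi.smul_apply, Pi.zero_apply, smul_eq_mul] at this ⊢
      rw [← this, Fintype.sum_prod_type_right]
      congr 1; funext j
      rw [Finset.sum_mul]
      congr 1; funext d
      ring
    exact Fintype.linearIndependent_iff.mp (pow_li F) _ h1 i
  have h2 : ∑ d : Fin (Fintype.card F), g (d, p.2) • (fun α : F => α ^ (d : ℕ)) = 0 := by
    funext α
    simpa using key α p.2
  exact Fintype.linearIndependent_iff.mp (pow_li F) _ h2 p.1

set_option maxHeartbeats 1000000 in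
lemma CA_finrank (F : Type*) [Field F] [Fintype F] (e a b : ℕ)
    (ha : a < Fintype.card F) (hb : e * a ≤ b) :
    Module.finrank F (CA F e a b)
      = ∑ d ∈ Finset.range (a + 1), min (b - e * d + 1) (Fintype.card F) := by
  classical
  set q := Fintype.card F with hqdef
  set W : ℕ × ℕ → (F → F → F) := fun p => (fun α β : F => α ^ p.1 * β ^ p.2) with hW
  set m : ℕ → ℕ := fun d => min (b - e * d + 1) q with hm
  set T : Finset (ℕ × ℕ) :=
    (Finset.Iic a).biUnion (fun d => ({d} : Finset ℕ) ×ˢ Finset.range (m d)) with hT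
  have hmemT : ∀ p : ℕ × ℕ, p ∈ T ↔ p.1 ≤ a ∧ p.2 < m p.1 := by
    intro p
    simp only [hT, Finset.mem_biUnion, Finset.mem_Iic, Finset.mem_product, Finset.mem_singleton,
      Finset.mem_range]
    constructor
    · rintro ⟨d, hd, rfl, h2⟩; exact ⟨hd, h2⟩
    · exact fun ⟨h1, h2⟩ => ⟨p.1, h1, rfl, h2⟩
  -- each summand of CA is a span
  have hterm : ∀ d, d ≤ a →
      (RS F ((b : ℤ) - e * d + 1)).map (vTensor F fun α : F => α ^ d)
        = Submodule.span F ((fun i => W (d, i)) '' Set.Iio (m d)) := by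
    intro d hd
    have hed : e * d ≤ b := le_trans (Nat.mul_le_mul_left e hd) hb
    have htn : ((b : ℤ) - e * d + 1).toNat = b - e * d + 1 := by
      have : ((e : ℤ) * d) = ((e * d : ℕ) : ℤ) := by push_cast; ring
      rw [this]; omega
    rw [RS_eq_span, Submodule.map_span, htn, Set.image_image]
    rfl
  -- CA = span of W '' T
  have hCA : CA F e a b = Submodule.span F (↑(T.image W) : Set (F → F → F)) := by
    apply le_antisymm
    · rw [CA]
      apply iSup₂_le
      intro d hd
      rw [Finset.mem_Iic] at hd
      rw [hterm d hd]
      apply Submodule.span_mono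
      rintro f ⟨i, hi, rfl⟩
      exact Finset.mem_coe.mpr (Finset.mem_image.mpr ⟨(d, i), (hmemT _).mpr ⟨hd, hi⟩, rfl⟩)
    · rw [Submodule.span_le]
      rintro f hf
      rw [Finset.mem_coe, Finset.mem_image] at hf
      obtain ⟨p, hp, rfl⟩ := hf
      rw [hmemT] at hp
      have : W p ∈ (RS F ((b : ℤ) - e * p.1 + 1)).map (vTensor F fun α : F => α ^ p.1) := by
        rw [hterm p.1 hp.1]
        exact Submodule.subset_span ⟨p.2, hp.2, rfl⟩
      exact Submodule.mem_iSup_of_mem p.1 (Submodule.mem_iSup_of_mem (Finset.mem_Iic.mpr hp.1) this)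
  -- bound on members of T
  have hTlt : ∀ p ∈ T, p.1 < q ∧ p.2 < q := by
    intro p hp
    rw [hmemT] at hp
    exact ⟨lt_of_le_of_lt hp.1 ha, lt_of_lt_of_le hp.2 (min_le_right _ _)⟩
  -- linear independence of the image
  set S' : Set (Fin q × Fin q) := {p | ((p.1 : ℕ), (p.2 : ℕ)) ∈ T} with hS'
  have himg : (fun p : Fin q × Fin q => (fun α β : F => α ^ (p.1 : ℕ) * β ^ (p.2 : ℕ))) '' S'
      = (↑(T.image W) : Set (F → F → F)) := by
    ext f
    constructor
    · rintro ⟨p, hp, rfl⟩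
      exact Finset.mem_coe.mpr (Finset.mem_image.mpr ⟨((p.1 : ℕ), (p.2 : ℕ)), hp, rfl⟩)
    · intro hf
      rw [Finset.mem_coe, Finset.mem_image] at hf
      obtain ⟨p, hp, rfl⟩ := hf
      obtain ⟨h1, h2⟩ := hTlt p hp
      exact ⟨(⟨p.1, h1⟩, ⟨p.2, h2⟩), by simpa [hS'] using hp, rfl⟩
  have hli : LinearIndependent F (fun x : (↑(T.image W) : Set (F → F → F)) => (x : F → F → F)) := by
    rw [← himg]
    exact LinearIndepOn.id_image (s := S')
      (v := fun p : Fin q × Fin q => (fun α β : F => α ^ (p.1 : ℕ) * β ^ (p.2 : ℕ)))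
      ((w_li F).comp ((↑) : S' → Fin q × Fin q) Subtype.val_injective)
  -- injectivity of W on T
  have hinj : Set.InjOn W ↑T := by
    intro p hp p' hp' hWp
    obtain ⟨h1, h2⟩ := hTlt p hp
    obtain ⟨h1', h2'⟩ := hTlt p' hp'
    have := (w_li F).injective (a₁ := (⟨p.1, h1⟩, ⟨p.2, h2⟩)) (a₂ := (⟨p'.1, h1'⟩, ⟨p'.2, h2'⟩))
      (by exact hWp)
    have e1 : p.1 = p'.1 := congrArg (fun x => (x.1 : ℕ)) this
    have e2 : p.2 = p'.2 := congrArg (fun x => (x.2 : ℕ)) this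
    exact Prod.ext e1 e2
  rw [hCA, finrank_span_finset_eq_card hli, Finset.card_image_of_injOn hinj, hT,
    Finset.card_biUnion]
  · rw [show Finset.Iic a = Finset.range (a + 1) by ext x; simp [Nat.lt_succ_iff]]
    exact Finset.sum_congr rfl (fun d _ => by simp [hm])
  · intro d _ d' _ hdd'
    rw [Function.onFun, Finset.disjoint_left]
    intro p hp hp'
    simp only [Finset.mem_product, Finset.mem_singleton] at hp hp'
    exact hdd' (hp.1 ▸ hp'.1 ▸ rfl)

lemma sum_range_cast (n : ℕ) : ∑ i ∈ Finset.range n, (i : ℚ) = n * (n - 1) / 2 := by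
  induction n with
  | zero => simp
  | succ k ih => rw [Finset.sum_range_succ, ih]; push_cast; ring

lemma sum_min_eq (q e a b : ℕ) (sA : ℤ) (hq1 : 1 ≤ q) (he : 1 ≤ e) (ha : a + 1 ≤ q)
    (hb : e * a ≤ b)
    (hsA : sA = if (q : ℤ) ≤ (b : ℤ) + 1 then min (((b : ℤ) + 1 - q) / e) (a : ℤ) else -1) :
    ((∑ d ∈ Finset.range (a + 1), min (b - e * d + 1) q : ℕ) : ℚ) =
      ((sA : ℚ) + 1) * q + ((a : ℚ) - sA) * ((b : ℚ) + 1 - e * ((a : ℚ) + sA + 1) / 2) := by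
  have he' : (0 : ℤ) < e := by exact_mod_cast he
  have hsA_lb : -1 ≤ sA := by
    rw [hsA]
    split_ifs with h
    · exact le_trans (by norm_num) (le_min (Int.ediv_nonneg (by omega) (by positivity))
        (by positivity))
    · exact le_refl _
  have hsA_ub : sA ≤ a := by
    rw [hsA]; split_ifs with h
    · exact min_le_right _ _
    · omega
  set n : ℕ := (sA + 1).toNat with hn
  have hn_int : (n : ℤ) = sA + 1 := Int.toNat_of_nonneg (by omega)
  have hn_le : n ≤ a + 1 := by omega
  -- per-term evaluation
  have hterm : ∀ d, d ≤ a → min (b - e * d + 1) q = if d < n then q else b - e * d + 1 := by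
    intro d hd
    have hed : e * d ≤ b := le_trans (Nat.mul_le_mul_left e hd) hb
    have hcast : ((e * d : ℕ) : ℤ) = (e : ℤ) * d := by push_cast; ring
    by_cases hdn : d < n
    · rw [if_pos hdn]
      have hdsA : (d : ℤ) ≤ sA := by omega
      have hq_le : (q : ℤ) ≤ (b : ℤ) + 1 := by
        by_contra hq'
        rw [hsA] at hdsA
        rw [if_neg hq'] at hdsA
        omega
      have h1 : (d : ℤ) ≤ ((b : ℤ) + 1 - q) / e := by
        rw [hsA, if_pos hq_le] at hdsA
        exact le_trans hdsA (min_le_left _ _)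
      have h2 : (d : ℤ) * e ≤ (b : ℤ) + 1 - q := (Int.le_ediv_iff_mul_le he').mp h1
      have h3 : ((e * d : ℕ) : ℤ) ≤ (b : ℤ) + 1 - q := by rw [hcast, mul_comm]; exact h2
      apply min_eq_right
      omega
    · rw [if_neg hdn]
      have hdsA : sA < (d : ℤ) := by omega
      apply min_eq_left
      by_cases hq_le : (q : ℤ) ≤ (b : ℤ) + 1
      · rw [hsA, if_pos hq_le] at hdsA
        have h1 : ((b : ℤ) + 1 - q) / e < d := by
          rcases min_lt_iff.mp hdsA with h | h
          · exact h
          · omega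
        have h2 : (b : ℤ) + 1 - q < d * e := by
          rcases lt_or_ge ((b : ℤ) + 1 - q) ((d : ℤ) * e) with h | h
          · exact h
          · exact absurd ((Int.le_ediv_iff_mul_le he').mpr h) (not_le.mpr h1)
        have h3 : (b : ℤ) + 1 - q < ((e * d : ℕ) : ℤ) := by rw [hcast, mul_comm]; exact h2
        omega
      · omega
  -- split sum
  rw [Finset.sum_congr rfl (fun d hd => hterm d (by
        rw [Finset.mem_range] at hd; omega))]
  rw [← Finset.sum_range_add_sum_Ico _ hn_le]
  have hA : ∑ d ∈ Finset.range n, (if d < n then q else b - e * d + 1) = n * q := by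
    rw [Finset.sum_congr rfl (fun d hd => if_pos (Finset.mem_range.mp hd))]
    simp [mul_comm]
  have hB : ((∑ d ∈ Finset.Ico n (a + 1), (if d < n then q else b - e * d + 1) : ℕ) : ℚ)
      = ∑ d ∈ Finset.Ico n (a + 1), ((b : ℚ) + 1 - e * d) := by
    rw [Nat.cast_sum]
    apply Finset.sum_congr rfl
    intro d hd
    rw [Finset.mem_Ico] at hd
    have hed : e * d ≤ b := le_trans (Nat.mul_le_mul_left e (by omega)) hb
    rw [if_neg (by omega)]
    have : ((b - e * d + 1 : ℕ) : ℚ) = (b : ℚ) - (e * d : ℕ) + 1 := by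
      rw [Nat.cast_add, Nat.cast_sub hed]; norm_num
    rw [this]; push_cast; ring
  rw [Nat.cast_add, hA, hB]
  have hIco : ∑ d ∈ Finset.Ico n (a + 1), ((b : ℚ) + 1 - e * d)
      = (a + 1 - n) * ((b : ℚ) + 1) - e * ((a + 1) * a / 2 - n * (n - 1) / 2) := by
    rw [Finset.sum_sub_distrib, Finset.sum_const, Nat.card_Ico, ← Finset.mul_sum]
    have h3 := Finset.sum_range_add_sum_Ico (fun d => (d : ℚ)) hn_le
    have h1 : ∑ d ∈ Finset.Ico n (a + 1), (d : ℚ)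
        = (a + 1) * a / 2 - n * (n - 1) / 2 := by
      rw [eq_sub_of_add_eq' h3, sum_range_cast, sum_range_cast]
      push_cast
      ring
    rw [h1, nsmul_eq_mul, Nat.cast_sub hn_le]
    push_cast
    ring
  rw [hIco]
  have hncast : (n : ℚ) = (sA : ℚ) + 1 := by
    have : ((n : ℤ) : ℚ) = ((sA + 1 : ℤ) : ℚ) := by rw [hn_int]
    push_cast at this
    exact this
  rw [Nat.cast_mul, hncast]
  ring

/-- the dimension of `C_{𝔸,e}(a,b)` for `e ≥ 1`, `0 ≤ a ≤ q-1`, `b - ea ≥ 0`: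
`dim = (s̃_A + 1)q + (a - s̃_A)(b + 1 - e(a + s̃_A + 1)/2)` where
`s̃_A = min{⌊(b+1-q)/e⌋, a}` if `b + 1 - q ≥ 0` and `s̃_A = -1` otherwise. -/
theorem CA_dim (F : Type*) [Field F] [Fintype F] (q e a b : ℕ) (sA : ℤ)
    (hq : Fintype.card F = q) (he : 1 ≤ e) (ha : a ≤ q - 1) (hb : e * a ≤ b)
    (hsA : sA = if (q : ℤ) ≤ (b : ℤ) + 1 then min (((b : ℤ) + 1 - q) / e) (a : ℤ) else -1) :
    (Module.finrank F (CA F e a b) : ℚ) =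
      ((sA : ℚ) + 1) * q + ((a : ℚ) - sA) * ((b : ℚ) + 1 - e * ((a : ℚ) + sA + 1) / 2) := by
  have hq1 : 1 ≤ q := hq ▸ Fintype.card_pos
  have ha' : a + 1 ≤ q := by omega
  rw [CA_finrank F e a b (by omega) hb, hq]
  exact sum_min_eq q e a b sA hq1 he ha' hb hsA
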